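/- For every number of workers $w$, there exists $t_0 = \operatorname{tow}(O(w))$ such that for all $t \ge t_0$, every worker-task assignment function on $w$ workers and task universe $[t]$ has switching cost exactly $w$: there exist tasks $\tau_1 < \tau_2 < \cdots < \tau_{w+1}$ in $[t]$ such that the assignments for the adjacent task sets $\{\tau_1, \dots, \tau_w\}$ and $\{\tau_2, \dots, \tau_{w+1}\}$ differ on every worker. -/

import Mathlib

open Finset

/-- A tower of twos of height `n`. -/
def tow : ℕ → ℕ
  | 0 => 1
  | n + 1 => 2 ^ tow n

lemma lt_tow (n : ℕ) : n < tow n := by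
  induction n with
  | zero => exact Nat.one_pos
  | succ n ih =>
    calc n + 1 < tow n + 1 := by omega
    _ ≤ 2 ^ tow n := Nat.succ_le_of_lt (Nat.lt_two_pow_self)
    _ = tow (n + 1) := rfl

lemma tow_mono : Monotone tow := by
  apply monotone_nat_of_le_succ
  intro n
  calc tow n ≤ 2 ^ tow n := Nat.le_of_lt (Nat.lt_two_pow_self)
  _ = tow (n+1) := rfl

lemma four_mul_le_two_pow {x : ℕ} (h : 4 ≤ x) : 4 * x ≤ 2 ^ x := by
  induction x with
  | zero => omega
  | succ n ih =>
    rcases Nat.lt_or_ge n 4 with h' | h'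
    · have : n = 3 := by omega
      subst this; norm_num
    · have h1 := ih h'
      have h2 : 16 ≤ 2 ^ n := by omega
      rw [pow_succ]; omega

lemma sq_le_two_pow {x : ℕ} (h : 4 ≤ x) : x * x ≤ 2 ^ x := by
  induction x with
  | zero => omega
  | succ n ih =>
    rcases Nat.lt_or_ge n 4 with h' | h'
    · have : n = 3 := by omega
      subst this; norm_num
    · have h1 := ih h'
      have h2 := four_mul_le_two_pow h'
      rw [pow_succ]; nlinarith

section Ramsey

variable {α κ : Type} [LinearOrder α] [Fintype κ] [Nonempty κ]

def RBelow (A P : Finset α) : Prop := ∀ a ∈ A, ∀ p ∈ P, a < p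

def REnd (C : Finset α → κ) (k : ℕ) (A P : Finset α) : Prop :=
  ∀ T ⊆ A, T.card = k → ∀ x ∈ A ∪ P, (∀ t ∈ T, t < x) → ∀ y ∈ A ∪ P, (∀ t ∈ T, t < y) →
    C (insert x T) = C (insert y T)

lemma ramsey_step (C : Finset α → κ) (k K : ℕ) (A P : Finset α)
    (hb : RBelow A P) (he : REnd C k A P)
    (hK : Fintype.card κ ^ 2 ^ (A.card + 1) ≤ K) (hP : P.Nonempty) :
    ∃ a ∈ P, ∃ P' ⊆ P, RBelow (insert a A) P' ∧ REnd C k (insert a A) P' ∧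
      P.card ≤ K * (P'.card + 1) := by
  classical
  have hK1 : 1 ≤ K := le_trans (Nat.one_le_pow _ _ Fintype.card_pos) hK
  set a := P.min' hP with ha
  have haP : a ∈ P := P.min'_mem hP
  set Q := P.erase a with hQdef
  have hPQ : P.card = Q.card + 1 := by
    rw [hQdef, card_erase_of_mem haP]
    have : 1 ≤ P.card := card_pos.2 hP
    omega
  -- the trace of an element on k-subsets of `insert a A`
  set s : Finset (Finset α) := (insert a A).powersetCard k with hs
  have hscard : s.card ≤ 2 ^ (A.card + 1) := by
    calc s.card ≤ ((insert a A).powerset).card :=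
          card_le_card (fun T hT => mem_powerset.2 (mem_powersetCard.1 hT).1)
    _ = 2 ^ (insert a A).card := card_powerset _
    _ ≤ 2 ^ (A.card + 1) := Nat.pow_le_pow_right (by norm_num) (card_insert_le _ _)
  have hcardβ : Fintype.card ({T // T ∈ s} → κ) ≤ K := by
    rw [Fintype.card_fun, Fintype.card_coe]
    exact le_trans (Nat.pow_le_pow_right Fintype.card_pos hscard) hK
  have hβpos : 0 < Fintype.card ({T // T ∈ s} → κ) := Fintype.card_pos
  set f : α → ({T // T ∈ s} → κ) := fun x T => C (insert x T.1) with hf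
  set n := Q.card / Fintype.card ({T // T ∈ s} → κ) with hn
  have hmaps : ∀ x ∈ Q, f x ∈ (univ : Finset ({T // T ∈ s} → κ)) := fun _ _ => mem_univ _
  have hcount : (univ : Finset ({T // T ∈ s} → κ)).card * n ≤ Q.card := by
    rw [card_univ, hn, mul_comm]
    exact Nat.div_mul_le_self _ _
  obtain ⟨b, -, hfib⟩ := exists_le_card_fiber_of_mul_le_card_of_maps_to hmaps univ_nonempty hcount
  refine ⟨a, haP, Q.filter (fun x => f x = b), ?_, ?_, ?_, ?_⟩
  · exact (filter_subset _ _).trans (erase_subset _ _)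
  · -- RBelow
    intro a' ha' p hp
    have hpQ : p ∈ Q := filter_subset _ _ hp
    have hpP : p ∈ P := erase_subset _ _ hpQ
    rcases mem_insert.1 ha' with rfl | hA
    · exact lt_of_le_of_ne (P.min'_le _ hpP) (Ne.symm (ne_of_mem_erase hpQ))
    · exact hb _ hA _ hpP
  · -- REnd
    intro T hT hTcard x hx hxT y hy hyT
    by_cases haT : a ∈ T
    · -- x, y must be in the filtered pool, same fiber
      have key : ∀ z ∈ insert a A ∪ Q.filter (fun x => f x = b), (∀ t ∈ T, t < z) →
          f z = b := by
        intro z hz hzT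
        have hza : a < z := hzT a haT
        rcases mem_union.1 hz with hz' | hz'
        · rcases mem_insert.1 hz' with rfl | hz''
          · exact absurd hza (lt_irrefl _)
          · exact absurd hza (not_lt.2 (le_of_lt (hb _ hz'' _ haP)))
        · exact (mem_filter.1 hz').2
      have hTs : T ∈ s := mem_powersetCard.2 ⟨hT, hTcard⟩
      have h1 := congrFun (key x hx hxT) ⟨T, hTs⟩
      have h2 := congrFun (key y hy hyT) ⟨T, hTs⟩
      exact h1.trans h2.symm
    · -- T ⊆ A, use old invariant
      have hTA : T ⊆ A := fun t ht => by
        rcases mem_insert.1 (hT ht) with rfl | h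
        · exact absurd ht haT
        · exact h
      have hsub : insert a A ∪ Q.filter (fun x => f x = b) ⊆ A ∪ P := by
        intro z hz
        rcases mem_union.1 hz with hz' | hz'
        · rcases mem_insert.1 hz' with rfl | h
          · exact mem_union_right _ haP
          · exact mem_union_left _ h
        · exact mem_union_right _ (erase_subset _ _ (filter_subset _ _ hz'))
      exact he T hTA hTcard x (hsub hx) hxT y (hsub hy) hyT
  · -- cardinality
    have hQlt : Q.card < Fintype.card ({T // T ∈ s} → κ) * (n + 1) := by
      rw [hn]
      have h := Nat.div_add_mod Q.card (Fintype.card ({T // T ∈ s} → κ))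
      have h2 := Nat.mod_lt Q.card hβpos
      nlinarith [h, h2]
    have hfib' : n ≤ (Q.filter (fun x => f x = b)).card := hfib
    calc P.card = Q.card + 1 := hPQ
    _ ≤ Fintype.card ({T // T ∈ s} → κ) * (n + 1) := hQlt
    _ ≤ K * (n + 1) := Nat.mul_le_mul_right _ hcardβ
    _ ≤ K * ((Q.filter (fun x => f x = b)).card + 1) :=
        Nat.mul_le_mul_left _ (by omega)

lemma ramsey_build (C : Finset α → κ) (k K : ℕ) (hK1 : 1 ≤ K) :
    ∀ (j : ℕ) (A P : Finset α), RBelow A P → REnd C k A P →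
      Fintype.card κ ^ 2 ^ (A.card + j) ≤ K → (2 * K) ^ j ≤ P.card →
      ∃ A' P', A ⊆ A' ∧ A' ⊆ A ∪ P ∧ A'.card = A.card + j ∧ REnd C k A' P' := by
  intro j
  induction j with
  | zero =>
    intro A P hb he hK hP
    exact ⟨A, P, Subset.refl _, subset_union_left, rfl, he⟩
  | succ j ih =>
    intro A P hb he hK hP
    have hPne : P.Nonempty := by
      rw [← card_pos]
      calc 0 < (2 * K) ^ (j + 1) := pow_pos (by omega) _
      _ ≤ P.card := hP
    have hK' : Fintype.card κ ^ 2 ^ (A.card + 1) ≤ K := by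
      refine le_trans ?_ hK
      exact Nat.pow_le_pow_right Fintype.card_pos (Nat.pow_le_pow_right (by norm_num) (by omega))
    obtain ⟨a, haP, P', hP'sub, hb', he', hcard⟩ := ramsey_step C k K A P hb he hK' hPne
    have haA : a ∉ A := fun h => lt_irrefl a (hb a h a haP)
    have hcard' : (2 * K) ^ j ≤ P'.card := by
      have hX1 : 1 ≤ (2 * K) ^ j := Nat.one_le_pow _ _ (by omega)
      have h2 : (2 * K) ^ j * (2 * K) ≤ K * (P'.card + 1) := by
        rw [← pow_succ]; exact le_trans hP hcard
      nlinarith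
    have hKins : Fintype.card κ ^ 2 ^ ((insert a A).card + j) ≤ K := by
      rw [card_insert_of_notMem haA]
      refine le_trans ?_ hK
      exact Nat.pow_le_pow_right Fintype.card_pos (Nat.pow_le_pow_right (by norm_num) (by omega))
    obtain ⟨A', P'', hsub1, hsub2, hcardA, hend⟩ := ih (insert a A) P' hb' he' hKins hcard'
    refine ⟨A', P'', (subset_insert a A).trans hsub1, ?_, ?_, hend⟩
    · refine hsub2.trans ?_
      intro z hz
      rcases mem_union.1 hz with hz' | hz'
      · rcases mem_insert.1 hz' with rfl | h
        · exact mem_union_right _ haP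
        · exact mem_union_left _ h
      · exact mem_union_right _ (hP'sub hz')
    · rw [hcardA, card_insert_of_notMem haA]; omega

lemma ramsey_hom (m₀ n : ℕ) (hm : 2 ≤ m₀) (hn : n ≤ tow m₀)
    (hc : Fintype.card κ ≤ tow m₀) :
    ∀ (k : ℕ) (C : Finset α → κ) (S : Finset α), tow (3 * k + m₀) ≤ S.card →
      ∃ M, M ⊆ S ∧ M.card = n ∧
        ∀ T₁, T₁ ⊆ M → T₁.card = k → ∀ T₂, T₂ ⊆ M → T₂.card = k → C T₁ = C T₂ := by
  intro k
  induction k with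
  | zero =>
    intro C S hS
    obtain ⟨M, hMS, hMcard⟩ := exists_subset_card_eq
      (le_trans hn (le_trans (tow_mono (by omega)) hS))
    refine ⟨M, hMS, hMcard, ?_⟩
    intro T₁ h₁ hc₁ T₂ h₂ hc₂
    rw [card_eq_zero.1 hc₁, card_eq_zero.1 hc₂]
  | succ k ih =>
    intro C S hS
    classical
    rcases Nat.eq_zero_or_pos k with rfl | hk
    · -- uniformity 1 : pigeonhole
      have hcount : (univ : Finset κ).card * n ≤ S.card := by
        rw [card_univ]
        have h4 : 4 ≤ tow m₀ := by
          calc 4 = tow 2 := by rfl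
          _ ≤ tow m₀ := tow_mono hm
        calc Fintype.card κ * n ≤ tow m₀ * tow m₀ := Nat.mul_le_mul hc hn
        _ ≤ 2 ^ tow m₀ := sq_le_two_pow h4
        _ = tow (m₀ + 1) := rfl
        _ ≤ tow (3 * 1 + m₀) := tow_mono (by omega)
        _ ≤ S.card := hS
      obtain ⟨b, -, hfib⟩ := exists_le_card_fiber_of_mul_le_card_of_maps_to
        (fun x _ => mem_univ (C {x})) univ_nonempty hcount
      obtain ⟨M, hMsub, hMcard⟩ := exists_subset_card_eq hfib
      refine ⟨M, hMsub.trans (filter_subset _ _), hMcard, ?_⟩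
      intro T₁ h₁ hc₁ T₂ h₂ hc₂
      obtain ⟨x₁, rfl⟩ := card_eq_one.1 hc₁
      obtain ⟨x₂, rfl⟩ := card_eq_one.1 hc₂
      have e₁ := (mem_filter.1 (hMsub (h₁ (mem_singleton_self x₁)))).2
      have e₂ := (mem_filter.1 (hMsub (h₂ (mem_singleton_self x₂)))).2
      rw [e₁, e₂]
    · -- uniformity k+1 with k ≥ 1 : Erdős–Rado step-down
      set x := tow (3 * k + m₀) with hxdef
      set c := Fintype.card κ with hcdef
      set K := c ^ 2 ^ x with hKdef
      have hx4 : 4 ≤ x := by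
        calc 4 = tow 2 := by rfl
        _ ≤ tow (3 * k + m₀) := tow_mono (by omega)
      have hcx : c ≤ x := le_trans hc (tow_mono (by omega))
      have hK1 : 1 ≤ K := Nat.one_le_pow _ _ Fintype.card_pos
      -- arithmetic : (2K)^x ≤ tow (3(k+1)+m₀)
      have harith : (2 * K) ^ x ≤ S.card := by
        have h1 : 2 * K ≤ 2 ^ (1 + x * 2 ^ x) := by
          calc 2 * K = 2 * c ^ 2 ^ x := rfl
          _ ≤ 2 * (2 ^ x) ^ 2 ^ x :=
              Nat.mul_le_mul_left _ (Nat.pow_le_pow_left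
                (le_trans hcx (le_of_lt (Nat.lt_two_pow_self))) _)
          _ = 2 ^ (1 + x * 2 ^ x) := by ring
        have hE : x * (1 + x * 2 ^ x) ≤ 2 ^ 2 ^ x := by
          have hxx : x * x ≤ 2 ^ x := sq_le_two_pow hx4
          have h4x : 4 * x ≤ 2 ^ x := four_mul_le_two_pow hx4
          have e1 : x * (1 + x * 2 ^ x) = x + x * x * 2 ^ x := by ring
          have e2 : x + x * x * 2 ^ x ≤ 2 ^ x + 2 ^ x * 2 ^ x := by
            have := Nat.lt_two_pow_self (n := x)
            nlinarith
          have e3 : (2:ℕ) ^ x + 2 ^ x * 2 ^ x ≤ 2 ^ (2 * x + 1) := by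
            have : (2:ℕ) ^ (2 * x + 1) = 2 ^ x * 2 ^ x * 2 := by
              ring
            nlinarith [Nat.one_le_two_pow (n := x)]
          have e4 : (2:ℕ) ^ (2 * x + 1) ≤ 2 ^ 2 ^ x :=
            Nat.pow_le_pow_right (by norm_num) (by omega)
          omega
        calc (2 * K) ^ x ≤ (2 ^ (1 + x * 2 ^ x)) ^ x := Nat.pow_le_pow_left h1 _
        _ = 2 ^ ((1 + x * 2 ^ x) * x) := by rw [← pow_mul]
        _ ≤ 2 ^ 2 ^ 2 ^ x := Nat.pow_le_pow_right (by norm_num) (by rw [mul_comm]; exact hE)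
        _ = tow (3 * (k + 1) + m₀) := by
            have e : 3 * (k + 1) + m₀ = (3 * k + m₀) + 3 := by ring
            rw [e]
            show (2:ℕ) ^ 2 ^ 2 ^ x = 2 ^ tow ((3 * k + m₀) + 2)
            rfl
        _ ≤ S.card := hS
      have hempty : REnd C k (∅ : Finset α) S := by
        intro T hT hTcard
        have : T = ∅ := subset_empty.1 hT
        subst this
        simp at hTcard
        omega
      obtain ⟨A', P', -, hA'sub, hA'card, hend⟩ :=
        ramsey_build C k K hK1 x ∅ S (by intro a ha; simp at ha) hempty
          (by simp only [card_empty, zero_add]; exact le_refl K) harith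
      rw [empty_union] at hA'sub
      rw [card_empty, zero_add] at hA'card
      -- induced coloring
      set C' : Finset α → κ := fun T =>
        if h : (A'.filter fun z => ∀ t ∈ T, t < z).Nonempty then
          C (insert ((A'.filter fun z => ∀ t ∈ T, t < z).min' h) T)
        else C T with hC'def
      obtain ⟨M, hMA', hMcard, hMhom⟩ := ih C' A' (le_of_eq hA'card.symm)
      have claim : ∀ U, U ⊆ M → U.card = k + 1 →
          ∃ T, T ⊆ M ∧ T.card = k ∧ C U = C' T := by
        intro U hU hUcard
        have hUne : U.Nonempty := card_pos.1 (by omega)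
        set z := U.max' hUne with hz
        set T := U.erase z with hT
        have hzU : z ∈ U := U.max'_mem hUne
        have hTM : T ⊆ M := (erase_subset _ _).trans hU
        have hTA' : T ⊆ A' := hTM.trans hMA'
        have hTcard : T.card = k := by rw [hT, card_erase_of_mem hzU]; omega
        have hzT : ∀ t ∈ T, t < z := by
          intro t ht
          exact lt_of_le_of_ne (U.le_max' t (mem_of_mem_erase ht)) (ne_of_mem_erase ht)
        have hzF : z ∈ A'.filter fun w => ∀ t ∈ T, t < w :=
          mem_filter.2 ⟨hMA' (hU hzU), hzT⟩
        have hFne : (A'.filter fun w => ∀ t ∈ T, t < w).Nonempty := ⟨z, hzF⟩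
        set y := (A'.filter fun w => ∀ t ∈ T, t < w).min' hFne with hy
        have hyF := (A'.filter fun w => ∀ t ∈ T, t < w).min'_mem hFne
        have hyA' : y ∈ A' := (mem_filter.1 hyF).1
        have hyT : ∀ t ∈ T, t < y := (mem_filter.1 hyF).2
        have hrw : C' T = C (insert y T) := dif_pos hFne
        have hUeq : insert z T = U := insert_erase hzU
        have := hend T hTA' hTcard z (mem_union_left _ (hMA' (hU hzU))) hzT
          y (mem_union_left _ hyA') hyT
        exact ⟨T, hTM, hTcard, by rw [← hUeq, this, hrw]⟩
      refine ⟨M, hMA'.trans hA'sub, hMcard, ?_⟩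
      intro T₁ h₁ hc₁ T₂ h₂ hc₂
      obtain ⟨U₁, hU₁M, hU₁c, he₁⟩ := claim T₁ h₁ hc₁
      obtain ⟨U₂, hU₂M, hU₂c, he₂⟩ := claim T₂ h₂ hc₂
      rw [he₁, he₂]
      exact hMhom _ hU₁M hU₁c _ hU₂M hU₂c

end Ramsey

/-- there is a constant `C` such that for every `w > 0` and every
`t ≥ tow(C·w)`, every worker-task assignment function `φ` (assigning workers `[w]`
bijectively to each `w`-element task set `T ⊆ [t]`) has switching cost exactly `w`:
there exist tasks `τ₁ < τ₂ < ⋯ < τ_{w+1}` such that the assignments for the adjacent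
task sets `{τ₁, …, τ_w}` and `{τ₂, …, τ_{w+1}}` differ on every worker. -/
theorem lower_bound_switching_cost :
    ∃ C : ℕ, 0 < C ∧ ∀ w : ℕ, 0 < w → ∀ t : ℕ, tow (C * w) ≤ t →
      ∀ φ : Finset (Fin t) → (Fin w → Fin t),
        (∀ T : Finset (Fin t), T.card = w →
          Function.Injective (φ T) ∧ ∀ i, φ T i ∈ T) →
        ∃ τ : Fin (w + 1) → Fin t, StrictMono τ ∧
          ∀ i : Fin w,
            φ (Finset.univ.image (fun j : Fin w => τ j.castSucc)) i ≠
            φ (Finset.univ.image (fun j : Fin w => τ j.succ)) i := by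
  classical
  refine ⟨8, by norm_num, ?_⟩
  intro w hw t ht φ hφ
  haveI : Nonempty (Fin w) := ⟨⟨0, hw⟩⟩
  set C : Finset (Fin t) → (Fin w → Fin w) := fun T =>
    if h : T.card = w then (fun i => (T.orderIsoOfFin h).symm ⟨φ T i, (hφ T h).2 i⟩)
    else fun i => i with hCdef
  have hc : Fintype.card (Fin w → Fin w) ≤ tow (2 * w + 3) := by
    rw [Fintype.card_fun, Fintype.card_fin]
    have h1 : w ^ w ≤ 2 ^ (w * w) := by
      rw [pow_mul]
      exact Nat.pow_le_pow_left (Nat.le_of_lt (Nat.lt_two_pow_self)) _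
    have h2 : w * w ≤ 2 ^ (2 * w) := by
      rw [two_mul, pow_add]
      exact Nat.mul_le_mul (Nat.le_of_lt (Nat.lt_two_pow_self)) (Nat.le_of_lt (Nat.lt_two_pow_self))
    have h3 : 2 * w ≤ tow (2 * w + 1) := le_of_lt (lt_of_lt_of_le (by omega) (lt_tow (2*w+1)).le)
    calc w ^ w ≤ 2 ^ (w * w) := h1
    _ ≤ 2 ^ 2 ^ (2 * w) := Nat.pow_le_pow_right (by norm_num) h2
    _ ≤ 2 ^ 2 ^ tow (2 * w + 1) :=
        Nat.pow_le_pow_right (by norm_num) (Nat.pow_le_pow_right (by norm_num) h3)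
    _ = tow (2 * w + 3) := rfl
  have hn : w + 1 ≤ tow (2 * w + 3) := le_of_lt (lt_of_le_of_lt (by omega) (lt_tow (2*w+3)))
  have hScard : tow (3 * w + (2 * w + 3)) ≤ (univ : Finset (Fin t)).card := by
    rw [card_univ, Fintype.card_fin]
    exact le_trans (tow_mono (by omega)) ht
  obtain ⟨M, -, hMcard, hMhom⟩ := ramsey_hom (2 * w + 3) (w + 1) (by omega) hn hc w C univ hScard
  set τ : Fin (w + 1) → Fin t := fun j => M.orderEmbOfFin hMcard j with hτdef
  have hτmono : StrictMono τ := (M.orderEmbOfFin hMcard).strictMono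
  refine ⟨τ, hτmono, ?_⟩
  set A : Finset (Fin t) := univ.image (fun j : Fin w => τ j.castSucc) with hAdef
  set B : Finset (Fin t) := univ.image (fun j : Fin w => τ j.succ) with hBdef
  have hAM : A ⊆ M := by
    intro z hz
    obtain ⟨j, -, rfl⟩ := mem_image.1 hz
    exact Finset.orderEmbOfFin_mem _ _ _
  have hBM : B ⊆ M := by
    intro z hz
    obtain ⟨j, -, rfl⟩ := mem_image.1 hz
    exact Finset.orderEmbOfFin_mem _ _ _
  have hAmono : StrictMono (fun j : Fin w => τ j.castSucc) :=
    fun a b hab => hτmono (by simpa using hab)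
  have hBmono : StrictMono (fun j : Fin w => τ j.succ) :=
    fun a b hab => hτmono (by simpa using hab)
  have hAcard : A.card = w := by
    rw [hAdef, card_image_of_injective _ hAmono.injective, card_univ, Fintype.card_fin]
  have hBcard : B.card = w := by
    rw [hBdef, card_image_of_injective _ hBmono.injective, card_univ, Fintype.card_fin]
  have hCAB : C A = C B := hMhom A hAM hAcard B hBM hBcard
  have hAemb : (fun j : Fin w => τ j.castSucc) = A.orderEmbOfFin hAcard :=
    Finset.orderEmbOfFin_unique hAcard
      (fun j => mem_image_of_mem _ (mem_univ j)) hAmono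
  have hBemb : (fun j : Fin w => τ j.succ) = B.orderEmbOfFin hBcard :=
    Finset.orderEmbOfFin_unique hBcard
      (fun j => mem_image_of_mem _ (mem_univ j)) hBmono
  have hφA : ∀ i, φ A i = τ (C A i).castSucc := by
    intro i
    have h1 : C A i = (A.orderIsoOfFin hAcard).symm ⟨φ A i, (hφ A hAcard).2 i⟩ := by
      simp only [hCdef]; rw [dif_pos hAcard]
    have h2 : (A.orderIsoOfFin hAcard) (C A i) = ⟨φ A i, (hφ A hAcard).2 i⟩ := by
      rw [h1, OrderIso.apply_symm_apply]
    have h3 : (A.orderEmbOfFin hAcard) (C A i) = φ A i := by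
      rw [← Finset.coe_orderIsoOfFin_apply, h2]
    rw [← h3, ← hAemb]
  have hφB : ∀ i, φ B i = τ (C B i).succ := by
    intro i
    have h1 : C B i = (B.orderIsoOfFin hBcard).symm ⟨φ B i, (hφ B hBcard).2 i⟩ := by
      simp only [hCdef]; rw [dif_pos hBcard]
    have h2 : (B.orderIsoOfFin hBcard) (C B i) = ⟨φ B i, (hφ B hBcard).2 i⟩ := by
      rw [h1, OrderIso.apply_symm_apply]
    have h3 : (B.orderEmbOfFin hBcard) (C B i) = φ B i := by
      rw [← Finset.coe_orderIsoOfFin_apply, h2]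
    rw [← h3, ← hBemb]
  intro i
  rw [hφA i, hφB i, hCAB]
  exact ne_of_lt (hτmono (Fin.castSucc_lt_succ))
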